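/- In a stochastic BPA game, the winning region of player Box for reaching a simple target set T with positive probability satisfies W_Box(T,>0) = B*AΓ*, where A = W_Box(T,>0) ∩ Γ and B = W_Box(T∪{ε},>0) ∩ Γ; in particular W_Box(T,>0) is a regular subset of Γ*. -/

import Mathlib

open scoped Classical

/-- A stochastic BPA game: finite stack alphabet `Γ`, rules `X → α` with
`|α| ≤ 2`, symbols partitioned among player Box, player Diamond, and
probabilistic symbols, the latter carrying positive rational distributions
over their rules. -/
structure BPA (Γ : Type*) [Fintype Γ] where
  rule : Γ → List Γ → Prop
  rule_len : ∀ X α, rule X α → α.length ≤ 2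
  rule_total : ∀ X, ∃ α, rule X α
  isBox : Γ → Prop
  isDiamond : Γ → Prop
  isCirc : Γ → Prop
  cover : ∀ X, isBox X ∨ isDiamond X ∨ isCirc X
  disjBD : ∀ X, ¬ (isBox X ∧ isDiamond X)
  disjBC : ∀ X, ¬ (isBox X ∧ isCirc X)
  disjDC : ∀ X, ¬ (isDiamond X ∧ isCirc X)
  prob : Γ → List Γ → ℝ
  prob_nonneg : ∀ X α, 0 ≤ prob X α
  prob_rat : ∀ X α, ∃ q : ℚ, prob X α = (q : ℝ)
  prob_supp : ∀ X α, isCirc X → (0 < prob X α ↔ rule X α)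
  prob_sum : ∀ X, isCirc X → ∑' α, prob X α = 1

variable {Γ : Type*} [Fintype Γ]

/-- A history-dependent randomized strategy for the player owning the symbols
satisfying `own` in the stochastic game induced by a BPA game: to every history
(sequence of configurations) and current configuration `X :: β` with `own X`,
it assigns a probability distribution on the applicable rules. -/
structure BPA.Strat (Δ : BPA Γ) (own : Γ → Prop) where
  f : List (List Γ) → List Γ → List Γ → ℝ
  nonneg : ∀ w c α, 0 ≤ f w c α
  supp : ∀ w X β α, own X → f w (X :: β) α ≠ 0 → Δ.rule X α
  sum_one : ∀ w X β, own X → ∑' α, f w (X :: β) α = 1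

/-- The distribution on rules chosen at configuration `c` after history `w`. -/
noncomputable def BPA.choice (Δ : BPA Γ) (σ : Δ.Strat Δ.isBox)
    (π : Δ.Strat Δ.isDiamond) (w : List (List Γ)) (c : List Γ) (α : List Γ) : ℝ :=
  match c with
  | [] => 0
  | X :: _ => if Δ.isBox X then σ.f w c α else if Δ.isDiamond X then π.f w c α
      else Δ.prob X α

/-- One-step transition probability between configurations in the play
induced by a BPA game (the empty configuration `ε` loops with probability 1,
and `X :: β` moves to `α ++ β` for a rule `X → α`). -/
noncomputable def BPA.stepP (Δ : BPA Γ) (σ : Δ.Strat Δ.isBox)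
    (π : Δ.Strat Δ.isDiamond) (w : List (List Γ)) (c c' : List Γ) : ℝ :=
  match c with
  | [] => if c' = [] then 1 else 0
  | X :: β => ∑' α : List Γ,
      if α ++ β = c' ∧ Δ.rule X α then Δ.choice σ π w (X :: β) α else 0

/-- Probability of reaching `T` from configuration `c` within at most `n`
transitions, after history `w`. -/
noncomputable def BPA.reachN (Δ : BPA Γ) (σ : Δ.Strat Δ.isBox)
    (π : Δ.Strat Δ.isDiamond) (T : Set (List Γ)) :
    ℕ → List (List Γ) → List Γ → ℝ
  | 0, _, c => if c ∈ T then 1 else 0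
  | n+1, w, c => if c ∈ T then 1 else
      ∑' c', Δ.stepP σ π w c c' * BPA.reachN Δ σ π T n (w ++ [c]) c'

/-- Probability `P_c^{σ,π}(Reach(T))` of reaching `T` from configuration `c`. -/
noncomputable def BPA.reachP (Δ : BPA Γ) (σ : Δ.Strat Δ.isBox)
    (π : Δ.Strat Δ.isDiamond) (T : Set (List Γ)) (c : List Γ) : ℝ :=
  ⨆ n, Δ.reachN σ π T n [] c

/-- The winning region `W_Box(T, >0)`. -/
def BPA.WBoxPos (Δ : BPA Γ) (T : Set (List Γ)) : Set (List Γ) :=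
  {c | ∃ σ : Δ.Strat Δ.isBox, ∀ π : Δ.Strat Δ.isDiamond, 0 < Δ.reachP σ π T c}

/-- The winning region `W_Box(T, =1)`. -/
def BPA.WBoxOne (Δ : BPA Γ) (T : Set (List Γ)) : Set (List Γ) :=
  {c | ∃ σ : Δ.Strat Δ.isBox, ∀ π : Δ.Strat Δ.isDiamond, Δ.reachP σ π T c = 1}

/-- The winning region `W_Diamond(T, =0)`. -/
def BPA.WDiaZero (Δ : BPA Γ) (T : Set (List Γ)) : Set (List Γ) :=
  {c | ∃ π : Δ.Strat Δ.isDiamond, ∀ σ : Δ.Strat Δ.isBox, Δ.reachP σ π T c = 0}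

/-- The winning region `W_Diamond(T, <1)`. -/
def BPA.WDiaLtOne (Δ : BPA Γ) (T : Set (List Γ)) : Set (List Γ) :=
  {c | ∃ π : Δ.Strat Δ.isDiamond, ∀ σ : Δ.Strat Δ.isBox, Δ.reachP σ π T c < 1}

/-- The language `{[X] : X ∈ S}` of one-letter words over a set of symbols. -/
def symLang (S : Set Γ) : Language Γ := {c | ∃ X ∈ S, c = [X]}

/-- The simple set of target configurations `S·Γ*` determined by the set of
symbols `S`: membership depends only on the top stack symbol, and `ε ∉ S·Γ*`. -/
def topLang (S : Set Γ) : Language Γ := {c | ∃ X β, c = X :: β ∧ X ∈ S}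


namespace BPA
variable {Γ : Type*} [Fintype Γ] {Δ : BPA Γ}

lemma summable_of_tsum_ne_zero {f : List Γ → ℝ} (h : ∑' x, f x ≠ 0) : Summable f := by
  by_contra hs; exact h (tsum_eq_zero_of_not_summable hs)

lemma choice_nonneg (σ : Δ.Strat Δ.isBox) (π : Δ.Strat Δ.isDiamond) (w : List (List Γ))
    (c α : List Γ) : 0 ≤ Δ.choice σ π w c α := by
  cases c with
  | nil => simp [BPA.choice]
  | cons X β =>
    simp only [BPA.choice]
    split_ifs with h1 h2
    · exact σ.nonneg _ _ _
    · exact π.nonneg _ _ _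
    · exact Δ.prob_nonneg _ _

lemma choice_tsum (σ : Δ.Strat Δ.isBox) (π : Δ.Strat Δ.isDiamond) (w : List (List Γ))
    (X : Γ) (β : List Γ) : ∑' α, Δ.choice σ π w (X :: β) α = 1 := by
  simp only [BPA.choice]
  split_ifs with h1 h2
  · exact σ.sum_one _ _ _ h1
  · exact π.sum_one _ _ _ h2
  · exact Δ.prob_sum X ((Δ.cover X).resolve_left h1 |>.resolve_left h2)

lemma choice_summable (σ : Δ.Strat Δ.isBox) (π : Δ.Strat Δ.isDiamond) (w : List (List Γ))
    (X : Γ) (β : List Γ) : Summable (Δ.choice σ π w (X :: β)) :=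
  summable_of_tsum_ne_zero (by rw [choice_tsum]; norm_num)

lemma choice_supp (σ : Δ.Strat Δ.isBox) (π : Δ.Strat Δ.isDiamond) (w : List (List Γ))
    (X : Γ) (β α : List Γ) (h : Δ.choice σ π w (X :: β) α ≠ 0) : Δ.rule X α := by
  simp only [BPA.choice] at h
  split_ifs at h with h1 h2
  · exact σ.supp _ _ _ _ h1 h
  · exact π.supp _ _ _ _ h2 h
  · exact (Δ.prob_supp X α ((Δ.cover X).resolve_left h1 |>.resolve_left h2)).1
      (lt_of_le_of_ne (Δ.prob_nonneg _ _) (Ne.symm h))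

end BPA
namespace BPA
variable {Γ : Type*} [Fintype Γ] {Δ : BPA Γ}

lemma stepP_nil (σ : Δ.Strat Δ.isBox) (π : Δ.Strat Δ.isDiamond) (w : List (List Γ))
    (c' : List Γ) : Δ.stepP σ π w [] c' = if c' = [] then 1 else 0 := rfl

lemma stepP_cons_apply (σ : Δ.Strat Δ.isBox) (π : Δ.Strat Δ.isDiamond) (w : List (List Γ))
    (X : Γ) (β α : List Γ) :
    Δ.stepP σ π w (X :: β) (α ++ β) =
      if Δ.rule X α then Δ.choice σ π w (X :: β) α else 0 := by
  show (∑' α' : List Γ, if α' ++ β = α ++ β ∧ Δ.rule X α' then Δ.choice σ π w (X :: β) α' else 0)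
      = _
  rw [tsum_eq_single α]
  · simp
  · intro α' hne
    have : α' ++ β ≠ α ++ β := fun h => hne (List.append_left_injective β h)
    simp [this]

lemma stepP_eq_zero (σ : Δ.Strat Δ.isBox) (π : Δ.Strat Δ.isDiamond) (w : List (List Γ))
    (X : Γ) (β c' : List Γ) (h : ∀ α, α ++ β ≠ c') : Δ.stepP σ π w (X :: β) c' = 0 := by
  show (∑' α' : List Γ, if α' ++ β = c' ∧ Δ.rule X α' then Δ.choice σ π w (X :: β) α' else 0) = 0
  have h0 : ∀ α', (if α' ++ β = c' ∧ Δ.rule X α' then Δ.choice σ π w (X :: β) α' else 0) = 0 := by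
    intro α'; simp [h α']
  rw [tsum_congr h0, tsum_zero]

lemma stepP_nonneg (σ : Δ.Strat Δ.isBox) (π : Δ.Strat Δ.isDiamond) (w : List (List Γ))
    (c c' : List Γ) : 0 ≤ Δ.stepP σ π w c c' := by
  cases c with
  | nil => rw [stepP_nil]; split_ifs <;> norm_num
  | cons X β =>
    refine tsum_nonneg fun α => ?_
    split_ifs
    · exact choice_nonneg σ π w _ α
    · exact le_refl 0

/-- Reindexing the sum over successor configurations as a sum over rules. -/
lemma tsum_stepP_mul (σ : Δ.Strat Δ.isBox) (π : Δ.Strat Δ.isDiamond) (w : List (List Γ))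
    (X : Γ) (β : List Γ) (F : List Γ → ℝ) :
    ∑' c', Δ.stepP σ π w (X :: β) c' * F c'
      = ∑' α, Δ.stepP σ π w (X :: β) (α ++ β) * F (α ++ β) := by
  refine (Function.Injective.tsum_eq (g := fun α => α ++ β) (List.append_left_injective β)
    (f := fun c' => Δ.stepP σ π w (X :: β) c' * F c') ?_).symm
  intro c' hc'
  by_contra hr
  have h2 : ∀ α, α ++ β ≠ c' := fun α hα => hr ⟨α, hα⟩
  apply hc'
  show Δ.stepP σ π w (X :: β) c' * F c' = 0
  rw [stepP_eq_zero σ π w X β c' h2, zero_mul]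

lemma summable_stepP_mul (σ : Δ.Strat Δ.isBox) (π : Δ.Strat Δ.isDiamond) (w : List (List Γ))
    (X : Γ) (β : List Γ) (F : List Γ → ℝ) (hF0 : ∀ c, 0 ≤ F c) (hF1 : ∀ c, F c ≤ 1) :
    Summable (fun c' => Δ.stepP σ π w (X :: β) c' * F c') := by
  rw [← Function.Injective.summable_iff (g := fun α => α ++ β) (List.append_left_injective β)]
  · refine Summable.of_nonneg_of_le (fun α => ?_) (fun α => ?_) (choice_summable σ π w X β)
    · exact mul_nonneg (stepP_nonneg σ π w _ _) (hF0 _)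
    · show Δ.stepP σ π w (X :: β) (α ++ β) * F (α ++ β) ≤ _
      rw [stepP_cons_apply]
      split_ifs
      · calc _ ≤ Δ.choice σ π w (X :: β) α * 1 :=
            mul_le_mul_of_nonneg_left (hF1 _) (choice_nonneg σ π w _ _)
          _ = _ := mul_one _
      · rw [zero_mul]; exact choice_nonneg σ π w _ _
  · intro c' hc'
    have h2 : ∀ α, α ++ β ≠ c' := by
      intro α hα; exact hc' ⟨α, hα⟩
    rw [stepP_eq_zero σ π w X β c' h2, zero_mul]

lemma stepP_le_choice (σ : Δ.Strat Δ.isBox) (π : Δ.Strat Δ.isDiamond) (w : List (List Γ))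
    (X : Γ) (β α : List Γ) :
    Δ.stepP σ π w (X :: β) (α ++ β) ≤ Δ.choice σ π w (X :: β) α := by
  rw [stepP_cons_apply]; split_ifs
  · exact le_refl _
  · exact choice_nonneg σ π w _ _

lemma tsum_stepP_mul_le_one (σ : Δ.Strat Δ.isBox) (π : Δ.Strat Δ.isDiamond) (w : List (List Γ))
    (X : Γ) (β : List Γ) (F : List Γ → ℝ) (hF0 : ∀ c, 0 ≤ F c) (hF1 : ∀ c, F c ≤ 1) :
    ∑' c', Δ.stepP σ π w (X :: β) c' * F c' ≤ 1 := by
  rw [tsum_stepP_mul]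
  calc ∑' α, Δ.stepP σ π w (X :: β) (α ++ β) * F (α ++ β)
      ≤ ∑' α, Δ.choice σ π w (X :: β) α := by
        refine Summable.tsum_le_tsum (fun α => ?_) ?_ (choice_summable σ π w X β)
        · calc Δ.stepP σ π w (X :: β) (α ++ β) * F (α ++ β)
              ≤ Δ.stepP σ π w (X :: β) (α ++ β) * 1 :=
                mul_le_mul_of_nonneg_left (hF1 _) (stepP_nonneg σ π w _ _)
            _ = Δ.stepP σ π w (X :: β) (α ++ β) := mul_one _
            _ ≤ _ := stepP_le_choice σ π w X β α
        · exact (summable_stepP_mul σ π w X β F hF0 hF1).comp_injective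
            (List.append_left_injective β)
    _ = 1 := choice_tsum σ π w X β

end BPA
namespace BPA
variable {Γ : Type*} [Fintype Γ] {Δ : BPA Γ}

lemma tsum_step_nil (σ : Δ.Strat Δ.isBox) (π : Δ.Strat Δ.isDiamond) (w : List (List Γ))
    (r : List Γ → ℝ) : ∑' c', Δ.stepP σ π w [] c' * r c' = r [] := by
  have : ∀ c' : List Γ, Δ.stepP σ π w [] c' * r c' = if c' = [] then r [] else 0 := by
    intro c'
    rw [stepP_nil]
    split_ifs with h
    · rw [h, one_mul]
    · rw [zero_mul]
  rw [tsum_congr this, tsum_ite_eq]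

lemma reachN_zero (σ : Δ.Strat Δ.isBox) (π : Δ.Strat Δ.isDiamond) (T : Set (List Γ))
    (w : List (List Γ)) (c : List Γ) :
    Δ.reachN σ π T 0 w c = if c ∈ T then 1 else 0 := rfl

lemma reachN_succ (σ : Δ.Strat Δ.isBox) (π : Δ.Strat Δ.isDiamond) (T : Set (List Γ))
    (n : ℕ) (w : List (List Γ)) (c : List Γ) :
    Δ.reachN σ π T (n+1) w c = if c ∈ T then 1 else
      ∑' c', Δ.stepP σ π w c c' * Δ.reachN σ π T n (w ++ [c]) c' := rfl

lemma reachN_nonneg (σ : Δ.Strat Δ.isBox) (π : Δ.Strat Δ.isDiamond) (T : Set (List Γ)) :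
    ∀ (n : ℕ) (w : List (List Γ)) (c : List Γ), 0 ≤ Δ.reachN σ π T n w c := by
  intro n
  induction n with
  | zero => intro w c; rw [reachN_zero]; split_ifs <;> norm_num
  | succ n ih =>
    intro w c
    rw [reachN_succ]
    split_ifs
    · norm_num
    · exact tsum_nonneg fun c' => mul_nonneg (stepP_nonneg σ π w c c') (ih _ c')

lemma reachN_le_one (σ : Δ.Strat Δ.isBox) (π : Δ.Strat Δ.isDiamond) (T : Set (List Γ)) :
    ∀ (n : ℕ) (w : List (List Γ)) (c : List Γ), Δ.reachN σ π T n w c ≤ 1 := by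
  intro n
  induction n with
  | zero => intro w c; rw [reachN_zero]; split_ifs <;> norm_num
  | succ n ih =>
    intro w c
    rw [reachN_succ]
    split_ifs
    · exact le_refl 1
    · cases c with
      | nil =>
        rw [tsum_step_nil]
        exact ih _ _
      | cons X β => exact tsum_stepP_mul_le_one σ π w X β _ (reachN_nonneg σ π T n _) (ih _)

lemma summable_step_reachN (σ : Δ.Strat Δ.isBox) (π : Δ.Strat Δ.isDiamond) (T : Set (List Γ))
    (n : ℕ) (w w' : List (List Γ)) (X : Γ) (β : List Γ) :
    Summable (fun c' => Δ.stepP σ π w (X :: β) c' * Δ.reachN σ π T n w' c') :=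
  summable_stepP_mul σ π w X β _ (reachN_nonneg σ π T n _) (reachN_le_one σ π T n _)

lemma reachN_mono (σ : Δ.Strat Δ.isBox) (π : Δ.Strat Δ.isDiamond) (T : Set (List Γ)) :
    ∀ (n : ℕ) (w : List (List Γ)) (c : List Γ),
      Δ.reachN σ π T n w c ≤ Δ.reachN σ π T (n+1) w c := by
  intro n
  induction n with
  | zero =>
    intro w c
    rw [reachN_zero, reachN_succ]
    split_ifs
    · exact le_refl 1
    · exact tsum_nonneg fun c' => mul_nonneg (stepP_nonneg σ π w c c')
        (reachN_nonneg σ π T 0 _ c')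
  | succ n ih =>
    intro w c
    rw [reachN_succ, reachN_succ]
    split_ifs
    · exact le_refl 1
    · cases c with
      | nil =>
        rw [tsum_step_nil, tsum_step_nil]
        exact ih _ _
      | cons X β =>
        refine Summable.tsum_le_tsum (fun c' => ?_)
          (summable_step_reachN σ π T n w _ X β) (summable_step_reachN σ π T (n+1) w _ X β)
        exact mul_le_mul_of_nonneg_left (ih _ c') (stepP_nonneg σ π w _ c')

lemma reachN_mono' (σ : Δ.Strat Δ.isBox) (π : Δ.Strat Δ.isDiamond) (T : Set (List Γ))
    (w : List (List Γ)) (c : List Γ) {m n : ℕ} (h : m ≤ n) :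
    Δ.reachN σ π T m w c ≤ Δ.reachN σ π T n w c :=
  monotone_nat_of_le_succ (fun k => reachN_mono σ π T k w c) h

lemma reachN_nil (σ : Δ.Strat Δ.isBox) (π : Δ.Strat Δ.isDiamond) (T : Set (List Γ))
    (hT : ([] : List Γ) ∉ T) : ∀ (n : ℕ) (w : List (List Γ)), Δ.reachN σ π T n w [] = 0 := by
  intro n
  induction n with
  | zero => intro w; rw [reachN_zero, if_neg hT]
  | succ n ih =>
    intro w
    rw [reachN_succ, if_neg hT, tsum_step_nil, ih]

lemma bddAbove_reachN (σ : Δ.Strat Δ.isBox) (π : Δ.Strat Δ.isDiamond) (T : Set (List Γ))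
    (c : List Γ) : BddAbove (Set.range fun n => Δ.reachN σ π T n [] c) := by
  refine ⟨1, ?_⟩
  rintro x ⟨n, rfl⟩
  exact reachN_le_one σ π T n [] c

lemma reachN_le_reachP (σ : Δ.Strat Δ.isBox) (π : Δ.Strat Δ.isDiamond) (T : Set (List Γ))
    (c : List Γ) (n : ℕ) : Δ.reachN σ π T n [] c ≤ Δ.reachP σ π T c :=
  le_ciSup (bddAbove_reachN σ π T c) n

lemma reachP_nonneg (σ : Δ.Strat Δ.isBox) (π : Δ.Strat Δ.isDiamond) (T : Set (List Γ))
    (c : List Γ) : 0 ≤ Δ.reachP σ π T c :=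
  le_trans (reachN_nonneg σ π T 0 [] c) (reachN_le_reachP σ π T c 0)

lemma reachP_pos_iff (σ : Δ.Strat Δ.isBox) (π : Δ.Strat Δ.isDiamond) (T : Set (List Γ))
    (c : List Γ) : 0 < Δ.reachP σ π T c ↔ ∃ n, 0 < Δ.reachN σ π T n [] c := by
  constructor
  · intro h
    by_contra hn
    push_neg at hn
    have : Δ.reachP σ π T c ≤ 0 :=
      ciSup_le fun n => hn n
    exact absurd (lt_of_lt_of_le h this) (lt_irrefl 0)
  · rintro ⟨n, hn⟩
    exact lt_of_lt_of_le hn (reachN_le_reachP σ π T c n)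

lemma reachP_eq_zero (σ : Δ.Strat Δ.isBox) (π : Δ.Strat Δ.isDiamond) (T : Set (List Γ))
    (c : List Γ) (h : ¬ 0 < Δ.reachP σ π T c) (n : ℕ) : Δ.reachN σ π T n [] c = 0 :=
  le_antisymm (le_trans (reachN_le_reachP σ π T c n) (not_lt.1 h))
    (reachN_nonneg σ π T n [] c)

end BPA
namespace BPA
variable {Γ : Type*} [Fintype Γ] {Δ : BPA Γ}

/-- Generic congruence: two strategy pairs that agree (modulo a history
transformation) along an invariant set of histories yield the same
finite-horizon reachability probabilities. -/
lemma reachN_congr (σ1 σ2 : Δ.Strat Δ.isBox) (π1 π2 : Δ.Strat Δ.isDiamond)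
    (T : Set (List Γ)) (F : List (List Γ) → List (List Γ))
    (hF : ∀ u c, F (u ++ [c]) = F u ++ [c])
    (Q : List (List Γ) → List Γ → Prop)
    (hQS : ∀ u c c', Q u c → Q (u ++ [c]) c')
    (hch : ∀ u c α, Q u c → Δ.choice σ1 π1 (F u) c α = Δ.choice σ2 π2 u c α) :
    ∀ (n : ℕ) (u : List (List Γ)) (c : List Γ), Q u c →
      Δ.reachN σ1 π1 T n (F u) c = Δ.reachN σ2 π2 T n u c := by
  intro n
  induction n with
  | zero => intro u c _; rw [reachN_zero, reachN_zero]
  | succ n ih =>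
    intro u c hQ
    rw [reachN_succ, reachN_succ]
    split_ifs with h
    · rfl
    · refine tsum_congr fun c' => ?_
      have hstep : Δ.stepP σ1 π1 (F u) c c' = Δ.stepP σ2 π2 u c c' := by
        cases c with
        | nil => rw [stepP_nil, stepP_nil]
        | cons X β =>
          refine tsum_congr fun α => ?_
          rw [hch u (X :: β) α hQ]
      rw [hstep, ← hF u c, ih (u ++ [c]) c' (hQS u c c' hQ)]

/-- The strategy induced on the game with `γ` appended below the stack. -/
def Strat.induce {own : Γ → Prop} (s : Δ.Strat own) (γ : List Γ) : Δ.Strat own where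
  f := fun w c α => s.f (w.map (· ++ γ)) (c ++ γ) α
  nonneg := fun w c α => s.nonneg _ _ _
  supp := fun w X β α h hf => s.supp _ X (β ++ γ) α h hf
  sum_one := fun w X β h => s.sum_one _ X (β ++ γ) h

/-- The strategy obtained by translating histories by a fixed prefix `h`. -/
def Strat.shift {own : Γ → Prop} (s : Δ.Strat own) (h : List (List Γ)) : Δ.Strat own where
  f := fun w c α => s.f (h ++ w) c α
  nonneg := fun w c α => s.nonneg _ _ _
  supp := fun w X β α h' hf => s.supp _ X β α h' hf
  sum_one := fun w X β h' => s.sum_one _ X β h'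

/-- A fixed default distribution on the rules of `X`. -/
noncomputable def dflt (Δ : BPA Γ) (X : Γ) (α : List Γ) : ℝ :=
  if α = Classical.choose (Δ.rule_total X) then 1 else 0

/-- A default (deterministic, memoryless) strategy. -/
noncomputable def dfltStrat (Δ : BPA Γ) (own : Γ → Prop) : Δ.Strat own where
  f := fun _ c α => match c with
    | [] => 0
    | X :: _ => Δ.dflt X α
  nonneg := by
    intro w c α
    cases c with
    | nil => exact le_refl 0
    | cons X β =>
      show (0:ℝ) ≤ Δ.dflt X α
      unfold dflt; split_ifs <;> norm_num
  supp := by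
    intro w X β α _ hf
    show Δ.rule X α
    by_contra
    apply hf
    show Δ.dflt X α = 0
    unfold dflt
    split_ifs with h
    · subst h; exact absurd (Classical.choose_spec (Δ.rule_total X)) (by assumption)
    · rfl
  sum_one := by
    intro w X β _
    show (∑' α, Δ.dflt X α) = 1
    unfold dflt
    exact tsum_ite_eq _ 1

/-- Whether a configuration is strictly longer than `γ` ("phase 1"). -/
def longer (γ u : List Γ) : Prop := γ.length < u.length

/-- Strip the trailing `γ` from a configuration. -/
def strip (γ u : List Γ) : List Γ := u.take (u.length - γ.length)

lemma strip_append (γ u : List Γ) : strip γ (u ++ γ) = u := by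
  unfold strip
  rw [List.length_append, Nat.add_sub_cancel, List.take_left]

lemma strip_cons (γ : List Γ) (X : Γ) (β : List Γ) (h : longer γ (X :: β)) :
    strip γ (X :: β) = X :: (β.take (β.length - γ.length)) := by
  unfold strip
  have h1 : γ.length ≤ β.length := by
    have := h; unfold longer at this; simp only [List.length_cons] at this; omega
  have h2 : (X :: β).length - γ.length = (β.length - γ.length) + 1 := by
    simp only [List.length_cons]; omega
  rw [h2, List.take_succ_cons]

/-- The combination of a "phase 1" strategy (playing in the part of the stack
above `γ`) and, once the stack has dropped to `γ`, "phase 2" strategies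
depending on the history pivot at which the drop happened. -/
noncomputable def combStrat {own : Γ → Prop} (γ : List Γ) (s1 : Δ.Strat own)
    (s2 : List (List Γ) → Δ.Strat own) : Δ.Strat own where
  f := fun w c α =>
    if (∀ u ∈ w, longer γ u) ∧ longer γ c then
      s1.f (w.map (strip γ)) (strip γ c) α
    else
      (s2 (w.takeWhile (fun u => decide (longer γ u)))).f
        (w.drop (w.takeWhile (fun u => decide (longer γ u))).length) c α
  nonneg := by
    intro w c α
    split_ifs
    · exact s1.nonneg _ _ _
    · exact (s2 _).nonneg _ _ _
  supp := by
    intro w X β α ho hf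
    split_ifs at hf with h
    · rw [strip_cons γ X β h.2] at hf
      exact s1.supp _ X _ α ho hf
    · exact (s2 _).supp _ X β α ho hf
  sum_one := by
    intro w X β ho
    split_ifs with h
    · rw [strip_cons γ X β h.2]
      exact s1.sum_one _ X _ ho
    · exact (s2 _).sum_one _ X β ho

lemma combStrat_lift {own : Γ → Prop} (γ : List Γ) (s1 : Δ.Strat own)
    (s2 : List (List Γ) → Δ.Strat own) (w : List (List Γ)) (c : List Γ)
    (hw : ∀ v ∈ w, v ≠ []) (hc : c ≠ []) (α : List Γ) :
    (combStrat γ s1 s2).f (w.map (· ++ γ)) (c ++ γ) α = s1.f w c α := by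
  show (if _ then _ else _) = _
  rw [if_pos]
  · congr 1
    · rw [List.map_map]
      have : ∀ v ∈ w, (strip γ ∘ (· ++ γ)) v = id v := by
        intro v _; simp [Function.comp, strip_append]
      rw [List.map_congr_left this, List.map_id]
    · exact strip_append γ c
  · constructor
    · intro u hu
      obtain ⟨v, hv, rfl⟩ := List.mem_map.1 hu
      show γ.length < (v ++ γ).length
      rw [List.length_append]
      have : v.length ≠ 0 := fun h => hw v hv (List.length_eq_zero_iff.1 h)
      omega
    · show γ.length < (c ++ γ).length
      rw [List.length_append]
      have : c.length ≠ 0 := fun h => hc (List.length_eq_zero_iff.1 h)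
      omega

lemma takeWhile_eq_self {p : List Γ → Bool} {l : List (List Γ)} (h : ∀ u ∈ l, p u) :
    l.takeWhile p = l := by
  induction l with
  | nil => rfl
  | cons x xs ih =>
    rw [List.takeWhile_cons, if_pos (h x (List.mem_cons_self))]
    rw [ih fun u hu => h u (List.mem_cons_of_mem x hu)]

lemma combStrat_pivot {own : Γ → Prop} (γ : List Γ) (s1 : Δ.Strat own)
    (s2 : List (List Γ) → Δ.Strat own) (h : List (List Γ)) (u : List (List Γ)) (c : List Γ)
    (hh : ∀ v ∈ h, longer γ v)
    (hu : (u = [] ∧ ¬ longer γ c) ∨ (∃ v t, u = v :: t ∧ ¬ longer γ v)) (α : List Γ) :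
    (combStrat γ s1 s2).f (h ++ u) c α = (s2 h).f u c α := by
  show (if _ then _ else _) = _
  have htw : (h ++ u).takeWhile (fun v => decide (longer γ v)) = h := by
    rw [List.takeWhile_append]
    rw [takeWhile_eq_self (fun v hv => decide_eq_true (hh v hv))]
    rw [if_pos rfl]
    rcases hu with ⟨rfl, _⟩ | ⟨v, t, rfl, hv⟩
    · simp
    · rw [List.takeWhile_cons, if_neg (by simpa using hv), List.append_nil]
  have hcond : ¬ ((∀ v ∈ h ++ u, longer γ v) ∧ longer γ c) := by
    rcases hu with ⟨rfl, hc⟩ | ⟨v, t, rfl, hv⟩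
    · exact fun hx => hc hx.2
    · exact fun hx => hv (hx.1 v (by simp))
  rw [if_neg hcond, htw, List.drop_left]

end BPA
namespace BPA
variable {Γ : Type*} [Fintype Γ] {Δ : BPA Γ}

/-- One-step comparison between two games whose choice distributions agree at
the current configuration and whose continuation values are comparable. -/
lemma tsum_step_le (σ1 σ2 : Δ.Strat Δ.isBox) (π1 π2 : Δ.Strat Δ.isDiamond)
    (w1 w2 : List (List Γ)) (X : Γ) (β1 β2 : List Γ) (F G : List Γ → ℝ)
    (hF0 : ∀ c, 0 ≤ F c) (hF1 : ∀ c, F c ≤ 1) (hG0 : ∀ c, 0 ≤ G c) (hG1 : ∀ c, G c ≤ 1)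
    (hch : ∀ α, Δ.choice σ1 π1 w1 (X :: β1) α = Δ.choice σ2 π2 w2 (X :: β2) α)
    (hle : ∀ α, Δ.rule X α → F (α ++ β1) ≤ G (α ++ β2)) :
    ∑' c', Δ.stepP σ1 π1 w1 (X :: β1) c' * F c'
      ≤ ∑' c', Δ.stepP σ2 π2 w2 (X :: β2) c' * G c' := by
  rw [tsum_stepP_mul, tsum_stepP_mul]
  refine Summable.tsum_le_tsum (fun α => ?_)
    ((summable_stepP_mul σ1 π1 w1 X β1 F hF0 hF1).comp_injective (List.append_left_injective β1))
    ((summable_stepP_mul σ2 π2 w2 X β2 G hG0 hG1).comp_injective (List.append_left_injective β2))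
  rw [stepP_cons_apply, stepP_cons_apply]
  split_ifs with hr
  · rw [hch α]
    exact mul_le_mul_of_nonneg_left (hle α hr) (choice_nonneg σ2 π2 w2 _ _)
  · rw [zero_mul, zero_mul]

lemma mem_topLang {S : Set Γ} {X : Γ} {β : List Γ} : (X :: β) ∈ topLang S ↔ X ∈ S := by
  constructor
  · rintro ⟨Y, δ, h, hY⟩
    cases h; exact hY
  · intro h; exact ⟨X, β, rfl, h⟩

lemma nil_not_mem_topLang {S : Set Γ} : ([] : List Γ) ∉ topLang S := by
  rintro ⟨Y, δ, h, -⟩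
  cases h

lemma mem_topLang_append {S : Set Γ} {c γ : List Γ} (hc : c ≠ []) :
    (c ++ γ) ∈ topLang S ↔ c ∈ topLang S := by
  cases c with
  | nil => exact absurd rfl hc
  | cons X β => rw [List.cons_append, mem_topLang, mem_topLang]

lemma mem_topLang_union_nil {S : Set Γ} {X : Γ} {β : List Γ} :
    (X :: β) ∈ (topLang S ∪ {([] : List Γ)} : Set (List Γ)) ↔ X ∈ S := by
  erw [Set.mem_union, mem_topLang]
  simp

lemma nil_mem_union_nil (S : Set Γ) :
    ([] : List Γ) ∈ (topLang S ∪ {([] : List Γ)} : Set (List Γ)) := Set.mem_union_right _ rfl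

/-- `ε` is not in the positive-probability winning region of Box for a simple
target set. -/
lemma nil_not_mem_WBoxPos {S : Set Γ} : ([] : List Γ) ∉ Δ.WBoxPos (topLang S) := by
  rintro ⟨σ, h⟩
  have π := Δ.dfltStrat Δ.isDiamond
  have h2 := h π
  have : Δ.reachP σ π (topLang S) [] = 0 := by
    unfold BPA.reachP
    have : ∀ n, Δ.reachN σ π (topLang S) n [] [] = 0 :=
      fun n => reachN_nil σ π _ nil_not_mem_topLang n []
    rw [show (fun n => Δ.reachN σ π (topLang S) n ([]:List (List Γ)) ([]:List Γ))
        = fun _ => (0:ℝ) from funext this]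
    exact ciSup_const
  rw [this] at h2
  exact absurd h2 (lt_irrefl 0)

end BPA
namespace BPA
variable {Γ : Type*} [Fintype Γ] {Δ : BPA Γ}

/-- Histories of the continuation play after the stack first dropped to `γ`. -/
def Qgam (γ : List Γ) (u : List (List Γ)) (c : List Γ) : Prop :=
  (u = [] ∧ c = γ) ∨ u.head? = some γ

lemma Qgam_step (γ : List Γ) (u : List (List Γ)) (c c' : List Γ) (h : Qgam γ u c) :
    Qgam γ (u ++ [c]) c' := by
  rcases h with ⟨rfl, rfl⟩ | h
  · right; rfl
  · right; rw [List.head?_append, h]; rfl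

lemma not_longer_self (γ : List Γ) : ¬ longer γ γ := lt_irrefl _

lemma Qgam_pivot_cond {γ : List Γ} {u : List (List Γ)} {c : List Γ} (h : Qgam γ u c) :
    (u = [] ∧ ¬ longer γ c) ∨ (∃ v t, u = v :: t ∧ ¬ longer γ v) := by
  rcases h with ⟨rfl, rfl⟩ | h
  · exact Or.inl ⟨rfl, not_longer_self _⟩
  · cases u with
    | nil => exact absurd h (by simp)
    | cons v t =>
      refine Or.inr ⟨v, t, rfl, ?_⟩
      have : v = γ := by simpa using h
      rw [this]; exact not_longer_self γ

lemma choice_pivot_D (γ : List Γ) (σ' : Δ.Strat Δ.isBox) (π0 : Δ.Strat Δ.isDiamond)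
    (πs : List (List Γ) → Δ.Strat Δ.isDiamond) (h u : List (List Γ)) (c α : List Γ)
    (hh : ∀ v ∈ h, longer γ v) (hq : Qgam γ u c) :
    Δ.choice σ' (combStrat γ π0 πs) (h ++ u) c α
      = Δ.choice (σ'.shift h) (πs h) u c α := by
  cases c with
  | nil => rfl
  | cons Y β =>
    simp only [BPA.choice]
    split_ifs with h1 h2
    · rfl
    · exact combStrat_pivot γ π0 πs h u (Y :: β) hh (Qgam_pivot_cond hq) α
    · rfl

lemma choice_pivot_B (γ : List Γ) (σ0 : Δ.Strat Δ.isBox)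
    (σs : List (List Γ) → Δ.Strat Δ.isBox) (π' : Δ.Strat Δ.isDiamond)
    (h u : List (List Γ)) (c α : List Γ)
    (hh : ∀ v ∈ h, longer γ v) (hq : Qgam γ u c) :
    Δ.choice (combStrat γ σ0 σs) π' (h ++ u) c α
      = Δ.choice (σs h) (π'.shift h) u c α := by
  cases c with
  | nil => rfl
  | cons Y β =>
    simp only [BPA.choice]
    split_ifs with h1 h2
    · exact combStrat_pivot γ σ0 σs h u (Y :: β) hh (Qgam_pivot_cond hq) α
    · rfl
    · rfl

lemma reachN_pivot_D (γ : List Γ) (σ' : Δ.Strat Δ.isBox) (π0 : Δ.Strat Δ.isDiamond)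
    (πs : List (List Γ) → Δ.Strat Δ.isDiamond) (T : Set (List Γ)) (h : List (List Γ))
    (hh : ∀ v ∈ h, longer γ v) (n : ℕ) (u : List (List Γ)) (c : List Γ) (hq : Qgam γ u c) :
    Δ.reachN σ' (combStrat γ π0 πs) T n (h ++ u) c
      = Δ.reachN (σ'.shift h) (πs h) T n u c :=
  reachN_congr σ' (σ'.shift h) (combStrat γ π0 πs) (πs h) T (fun u => h ++ u)
    (fun u c => (List.append_assoc h u [c]).symm) (Qgam γ) (Qgam_step γ)
    (fun u c α hq => choice_pivot_D γ σ' π0 πs h u c α hh hq) n u c hq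

lemma reachN_pivot_B (γ : List Γ) (σ0 : Δ.Strat Δ.isBox)
    (σs : List (List Γ) → Δ.Strat Δ.isBox) (π' : Δ.Strat Δ.isDiamond)
    (T : Set (List Γ)) (h : List (List Γ))
    (hh : ∀ v ∈ h, longer γ v) (n : ℕ) (u : List (List Γ)) (c : List Γ) (hq : Qgam γ u c) :
    Δ.reachN (combStrat γ σ0 σs) π' T n (h ++ u) c
      = Δ.reachN (σs h) (π'.shift h) T n u c :=
  reachN_congr (combStrat γ σ0 σs) (σs h) π' (π'.shift h) T (fun u => h ++ u)
    (fun u c => (List.append_assoc h u [c]).symm) (Qgam γ) (Qgam_step γ)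
    (fun u c α hq => choice_pivot_B γ σ0 σs π' h u c α hh hq) n u c hq

lemma longer_lift {γ : List Γ} {w : List (List Γ)} (hw : ∀ v ∈ w, v ≠ []) :
    ∀ v ∈ w.map (· ++ γ), longer γ v := by
  intro v hv
  obtain ⟨x, hx, rfl⟩ := List.mem_map.1 hv
  show γ.length < (x ++ γ).length
  rw [List.length_append]
  have : x.length ≠ 0 := fun h => hw x hx (List.length_eq_zero_iff.1 h)
  omega

lemma choice_lift_comb_D (γ : List Γ) (σ' : Δ.Strat Δ.isBox) (π0 : Δ.Strat Δ.isDiamond)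
    (πs : List (List Γ) → Δ.Strat Δ.isDiamond) (u : List (List Γ)) (c α : List Γ)
    (hu : ∀ v ∈ u, v ≠ []) (hc : c ≠ []) :
    Δ.choice σ' (combStrat γ π0 πs) (u.map (· ++ γ)) (c ++ γ) α
      = Δ.choice (σ'.induce γ) π0 u c α := by
  cases c with
  | nil => exact absurd rfl hc
  | cons Y β =>
    simp only [List.cons_append, BPA.choice]
    split_ifs with h1 h2
    · rfl
    · exact combStrat_lift γ π0 πs u (Y :: β) hu (List.cons_ne_nil Y β) α
    · rfl

lemma choice_lift_comb_B (γ : List Γ) (σ0 : Δ.Strat Δ.isBox)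
    (σs : List (List Γ) → Δ.Strat Δ.isBox) (π' : Δ.Strat Δ.isDiamond)
    (u : List (List Γ)) (c α : List Γ) (hu : ∀ v ∈ u, v ≠ []) (hc : c ≠ []) :
    Δ.choice (combStrat γ σ0 σs) π' (u.map (· ++ γ)) (c ++ γ) α
      = Δ.choice σ0 (π'.induce γ) u c α := by
  cases c with
  | nil => exact absurd rfl hc
  | cons Y β =>
    simp only [List.cons_append, BPA.choice]
    split_ifs with h1 h2
    · exact combStrat_lift γ σ0 σs u (Y :: β) hu (List.cons_ne_nil Y β) α
    · rfl
    · rfl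

lemma reachN_of_mem (σ : Δ.Strat Δ.isBox) (π : Δ.Strat Δ.isDiamond) {T : Set (List Γ)}
    {c : List Γ} (h : c ∈ T) (n : ℕ) (w : List (List Γ)) : Δ.reachN σ π T n w c = 1 := by
  cases n with
  | zero => rw [reachN_zero, if_pos h]
  | succ n => rw [reachN_succ, if_pos h]

end BPA
namespace BPA
variable {Γ : Type*} [Fintype Γ] {Δ : BPA Γ}

lemma forall_ne_nil_append {w : List (List Γ)} {c : List Γ} (hw : ∀ v ∈ w, v ≠ [])
    (hc : c ≠ []) : ∀ v ∈ w ++ [c], v ≠ [] := by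
  intro v hv
  rcases List.mem_append.1 hv with h | h
  · exact hw v h
  · rw [List.mem_singleton.1 h]; exact hc

lemma map_lift_append (γ : List Γ) (w : List (List Γ)) (Y : Γ) (β : List Γ) :
    List.map (fun x => x ++ γ) w ++ [Y :: (β ++ γ)]
      = List.map (fun x => x ++ γ) (w ++ [Y :: β]) := by simp

/-- Simulation for case A: if Diamond plays (on top of `γ`) a strategy for the
game on `[X]`, the composed reach-probability is bounded by the segment
reach-probability for target `T ∪ {ε}`. -/
lemma simA (γ : List Γ) (ΓT : Set Γ) (σ' σ0 : Δ.Strat Δ.isBox) (π' π0 : Δ.Strat Δ.isDiamond)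
    (hch : ∀ u (c : List Γ), (∀ v ∈ u, v ≠ []) → c ≠ [] → ∀ α,
      Δ.choice σ' π' (u.map (· ++ γ)) (c ++ γ) α = Δ.choice σ0 π0 u c α) :
    ∀ (n : ℕ) (w : List (List Γ)) (c : List Γ), (∀ v ∈ w, v ≠ []) →
      Δ.reachN σ' π' (topLang ΓT) n (w.map (· ++ γ)) (c ++ γ)
        ≤ Δ.reachN σ0 π0 (topLang ΓT ∪ {([] : List Γ)} : Set (List Γ)) n w c := by
  intro n
  induction n with
  | zero =>
    intro w c hw
    cases c with
    | nil =>
      erw [reachN_zero, reachN_zero, if_pos (nil_mem_union_nil ΓT)]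
      split_ifs <;> norm_num
    | cons Y β =>
      erw [List.cons_append, reachN_zero, reachN_zero]
      by_cases hY : Y ∈ ΓT
      · erw [if_pos (mem_topLang.2 hY), if_pos (mem_topLang_union_nil.2 hY)]
      · erw [if_neg (fun hm => hY (mem_topLang.1 hm)),
          if_neg (fun hm => hY (mem_topLang_union_nil.1 hm))]
  | succ n ih =>
    intro w c hw
    cases c with
    | nil =>
      rw [reachN_of_mem σ0 π0 (nil_mem_union_nil ΓT)]
      exact reachN_le_one σ' π' _ _ _ _
    | cons Y β =>
      by_cases hY : Y ∈ ΓT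
      · rw [List.cons_append, reachN_of_mem σ' π' (mem_topLang.2 hY),
          reachN_of_mem σ0 π0 (mem_topLang_union_nil.2 hY)]
      · erw [List.cons_append, reachN_succ, reachN_succ,
          if_neg (fun hm => hY (mem_topLang.1 hm)),
          if_neg (fun hm => hY (mem_topLang_union_nil.1 hm))]
        refine tsum_step_le σ' σ0 π' π0 (w.map (· ++ γ)) w Y (β ++ γ) β _ _
          (fun c' => reachN_nonneg _ _ _ _ _ c') (fun c' => reachN_le_one _ _ _ _ _ c')
          (fun c' => reachN_nonneg _ _ _ _ _ c') (fun c' => reachN_le_one _ _ _ _ _ c')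
          (fun α => hch w (Y :: β) hw (List.cons_ne_nil Y β) α) ?_
        intro α _
        rw [map_lift_append, ← List.append_assoc]
        exact ih (w ++ [Y :: β]) (α ++ β)
          (forall_ne_nil_append hw (List.cons_ne_nil Y β))

/-- Simulation for case B: Diamond combines a `T`-avoiding strategy in the
segment with strategies annihilating the play after the stack drops to `γ`. -/
lemma simB (γ : List Γ) (ΓT : Set Γ) (σ' σ0 : Δ.Strat Δ.isBox) (π' π0 : Δ.Strat Δ.isDiamond)
    (hch : ∀ u (c : List Γ), (∀ v ∈ u, v ≠ []) → c ≠ [] → ∀ α,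
      Δ.choice σ' π' (u.map (· ++ γ)) (c ++ γ) α = Δ.choice σ0 π0 u c α)
    (hpop : ∀ u : List (List Γ), (∀ v ∈ u, v ≠ []) → ∀ m,
      Δ.reachN σ' π' (topLang ΓT) m (u.map (· ++ γ)) γ = 0) :
    ∀ (n : ℕ) (w : List (List Γ)) (c : List Γ), (∀ v ∈ w, v ≠ []) →
      Δ.reachN σ' π' (topLang ΓT) n (w.map (· ++ γ)) (c ++ γ)
        ≤ Δ.reachN σ0 π0 (topLang ΓT) n w c := by
  intro n
  induction n with
  | zero =>
    intro w c hw
    cases c with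
    | nil =>
      rw [List.nil_append, hpop w hw 0]
      exact reachN_nonneg _ _ _ _ _ _
    | cons Y β =>
      erw [List.cons_append, reachN_zero, reachN_zero]
      by_cases hY : Y ∈ ΓT
      · erw [if_pos (mem_topLang.2 hY), if_pos (mem_topLang.2 hY)]
      · erw [if_neg (fun hm => hY (mem_topLang.1 hm)),
          if_neg (fun hm => hY (mem_topLang.1 hm))]
  | succ n ih =>
    intro w c hw
    cases c with
    | nil =>
      rw [List.nil_append, hpop w hw (n+1)]
      exact reachN_nonneg _ _ _ _ _ _
    | cons Y β =>
      by_cases hY : Y ∈ ΓT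
      · rw [List.cons_append, reachN_of_mem σ' π' (mem_topLang.2 hY),
          reachN_of_mem σ0 π0 (mem_topLang.2 hY)]
      · erw [List.cons_append, reachN_succ, reachN_succ,
          if_neg (fun hm => hY (mem_topLang.1 hm)),
          if_neg (fun hm => hY (mem_topLang.1 hm))]
        refine tsum_step_le σ' σ0 π' π0 (w.map (· ++ γ)) w Y (β ++ γ) β _ _
          (fun c' => reachN_nonneg _ _ _ _ _ c') (fun c' => reachN_le_one _ _ _ _ _ c')
          (fun c' => reachN_nonneg _ _ _ _ _ c') (fun c' => reachN_le_one _ _ _ _ _ c')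
          (fun α => hch w (Y :: β) hw (List.cons_ne_nil Y β) α) ?_
        intro α _
        by_cases hab : α ++ β = []
        · obtain ⟨hα, hβ⟩ := List.append_eq_nil_iff.1 hab
          subst hα; subst hβ
          rw [map_lift_append]
          simp only [List.nil_append]
          rw [hpop (w ++ [Y :: []]) (forall_ne_nil_append hw (List.cons_ne_nil Y [])) n,
            reachN_nil σ0 π0 _ nil_not_mem_topLang]
        · rw [map_lift_append, ← List.append_assoc]
          exact ih (w ++ [Y :: β]) (α ++ β)
            (forall_ne_nil_append hw (List.cons_ne_nil Y β))

end BPA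
namespace BPA
variable {Γ : Type*} [Fintype Γ] {Δ : BPA Γ}

/-- Simulation for case (i): Box plays its winning segment strategy on top of
`γ`; the composed value dominates the segment value for target `T`. -/
lemma simI (γ : List Γ) (ΓT : Set Γ) (σ' σ0 : Δ.Strat Δ.isBox) (π' π0 : Δ.Strat Δ.isDiamond)
    (hch : ∀ u (c : List Γ), (∀ v ∈ u, v ≠ []) → c ≠ [] → ∀ α,
      Δ.choice σ' π' (u.map (· ++ γ)) (c ++ γ) α = Δ.choice σ0 π0 u c α) :
    ∀ (n : ℕ) (w : List (List Γ)) (c : List Γ), (∀ v ∈ w, v ≠ []) →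
      Δ.reachN σ0 π0 (topLang ΓT) n w c
        ≤ Δ.reachN σ' π' (topLang ΓT) n (w.map (· ++ γ)) (c ++ γ) := by
  intro n
  induction n with
  | zero =>
    intro w c hw
    cases c with
    | nil =>
      erw [reachN_zero, if_neg nil_not_mem_topLang]
      exact reachN_nonneg _ _ _ _ _ _
    | cons Y β =>
      erw [List.cons_append, reachN_zero, reachN_zero]
      by_cases hY : Y ∈ ΓT
      · erw [if_pos (mem_topLang.2 hY), if_pos (mem_topLang.2 hY)]
      · erw [if_neg (fun hm => hY (mem_topLang.1 hm)),
          if_neg (fun hm => hY (mem_topLang.1 hm))]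
  | succ n ih =>
    intro w c hw
    cases c with
    | nil =>
      rw [reachN_nil σ0 π0 _ nil_not_mem_topLang]
      exact reachN_nonneg _ _ _ _ _ _
    | cons Y β =>
      by_cases hY : Y ∈ ΓT
      · rw [List.cons_append, reachN_of_mem σ' π' (mem_topLang.2 hY),
          reachN_of_mem σ0 π0 (mem_topLang.2 hY)]
      · erw [List.cons_append, reachN_succ, reachN_succ,
          if_neg (fun hm => hY (mem_topLang.1 hm)),
          if_neg (fun hm => hY (mem_topLang.1 hm))]
        refine tsum_step_le σ0 σ' π0 π' w (w.map (· ++ γ)) Y β (β ++ γ) _ _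
          (fun c' => reachN_nonneg _ _ _ _ _ c') (fun c' => reachN_le_one _ _ _ _ _ c')
          (fun c' => reachN_nonneg _ _ _ _ _ c') (fun c' => reachN_le_one _ _ _ _ _ c')
          (fun α => (hch w (Y :: β) hw (List.cons_ne_nil Y β) α).symm) ?_
        intro α _
        by_cases hab : α ++ β = []
        · rw [hab, reachN_nil σ0 π0 _ nil_not_mem_topLang]
          exact reachN_nonneg _ _ _ _ _ _
        · rw [map_lift_append, ← List.append_assoc]
          exact ih (w ++ [Y :: β]) (α ++ β)
            (forall_ne_nil_append hw (List.cons_ne_nil Y β))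

/-- Simulation for case (ii): Box combines a winning segment strategy for
`T ∪ {ε}` with a winning strategy from `γ`; the composed value dominates
`δ` times the segment value. -/
lemma simII (γ : List Γ) (ΓT : Set Γ) (σ' σ0 : Δ.Strat Δ.isBox) (π' π0 : Δ.Strat Δ.isDiamond)
    (δ : ℝ) (n₂ N : ℕ) (hδ0 : 0 ≤ δ) (hδ1 : δ ≤ 1)
    (hch : ∀ u (c : List Γ), (∀ v ∈ u, v ≠ []) → c ≠ [] → ∀ α,
      Δ.choice σ' π' (u.map (· ++ γ)) (c ++ γ) α = Δ.choice σ0 π0 u c α)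
    (hpop : ∀ u : List (List Γ), (∀ v ∈ u, v ≠ []) → u.length ≤ N →
      (∀ v ∈ u, v.length ≤ N + 1) → ∀ m, n₂ ≤ m →
      δ ≤ Δ.reachN σ' π' (topLang ΓT) m (u.map (· ++ γ)) γ) :
    ∀ (n : ℕ) (w : List (List Γ)) (c : List Γ), n + w.length ≤ N → (∀ v ∈ w, v ≠ []) →
      (∀ v ∈ w ++ [c], v.length ≤ w.length + 1) →
      δ * Δ.reachN σ0 π0 (topLang ΓT ∪ {([] : List Γ)} : Set (List Γ)) n w c
        ≤ Δ.reachN σ' π' (topLang ΓT) (n + n₂) (w.map (· ++ γ)) (c ++ γ) := by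
  intro n
  induction n with
  | zero =>
    intro w c hN hw hlen
    cases c with
    | nil =>
      rw [reachN_of_mem σ0 π0 (nil_mem_union_nil ΓT), mul_one, List.nil_append, Nat.zero_add]
      refine hpop w hw (by omega) (fun v hv => ?_) n₂ le_rfl
      have := hlen v (List.mem_append_left _ hv)
      omega
    | cons Y β =>
      by_cases hY : Y ∈ ΓT
      · rw [List.cons_append, reachN_of_mem σ' π' (mem_topLang.2 hY),
          reachN_of_mem σ0 π0 (mem_topLang_union_nil.2 hY), mul_one]
        exact hδ1
      · rw [reachN_zero, if_neg (fun hm => hY (mem_topLang_union_nil.1 hm)), mul_zero]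
        exact reachN_nonneg _ _ _ _ _ _
  | succ n ih =>
    intro w c hN hw hlen
    cases c with
    | nil =>
      rw [reachN_of_mem σ0 π0 (nil_mem_union_nil ΓT), mul_one, List.nil_append]
      refine hpop w hw (by omega) (fun v hv => ?_) (n + 1 + n₂) (by omega)
      have := hlen v (List.mem_append_left _ hv)
      omega
    | cons Y β =>
      by_cases hY : Y ∈ ΓT
      · rw [List.cons_append, reachN_of_mem σ' π' (mem_topLang.2 hY),
          reachN_of_mem σ0 π0 (mem_topLang_union_nil.2 hY), mul_one]
        exact hδ1
      · have hstep : n + 1 + n₂ = (n + n₂) + 1 := by omega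
        erw [List.cons_append, hstep, reachN_succ, reachN_succ,
          if_neg (fun hm => hY (mem_topLang.1 hm)),
          if_neg (fun hm => hY (mem_topLang_union_nil.1 hm)), ← tsum_mul_left]
        have hcongr : ∀ c', δ * (Δ.stepP σ0 π0 w (Y :: β) c'
            * Δ.reachN σ0 π0 (topLang ΓT ∪ {([] : List Γ)} : Set (List Γ)) n (w ++ [Y :: β]) c')
            = Δ.stepP σ0 π0 w (Y :: β) c'
            * (δ * Δ.reachN σ0 π0 (topLang ΓT ∪ {([] : List Γ)} : Set (List Γ)) n
                (w ++ [Y :: β]) c') := fun c' => mul_left_comm δ _ _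
        rw [tsum_congr hcongr]
        refine tsum_step_le σ0 σ' π0 π' w (w.map (· ++ γ)) Y β (β ++ γ) _ _
          (fun c' => mul_nonneg hδ0 (reachN_nonneg _ _ _ _ _ c'))
          (fun c' => mul_le_one₀ hδ1 (reachN_nonneg _ _ _ _ _ c') (reachN_le_one _ _ _ _ _ c'))
          (fun c' => reachN_nonneg _ _ _ _ _ c') (fun c' => reachN_le_one _ _ _ _ _ c')
          (fun α => (hch w (Y :: β) hw (List.cons_ne_nil Y β) α).symm) ?_
        intro α hr
        by_cases hab : α ++ β = []
        · rw [hab, reachN_of_mem σ0 π0 (nil_mem_union_nil ΓT), mul_one]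
          obtain ⟨hα, hβ⟩ := List.append_eq_nil_iff.1 hab
          subst hα; subst hβ
          rw [map_lift_append]
          simp only [List.nil_append]
          refine hpop (w ++ [Y :: []]) (forall_ne_nil_append hw (List.cons_ne_nil Y []))
            (by rw [List.length_append]; simp; omega) (fun v hv => ?_) (n + n₂) (by omega)
          rcases List.mem_append.1 hv with h | h
          · have := hlen v (List.mem_append_left _ h)
            omega
          · rw [List.mem_singleton.1 h]
            have := hlen (Y :: []) (List.mem_append_right _ (List.mem_singleton.2 rfl))
            simp only [List.length_cons, List.length_nil]
            omega
        · rw [map_lift_append, ← List.append_assoc]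
          refine ih (w ++ [Y :: β]) (α ++ β) (by rw [List.length_append]; simp; omega)
            (forall_ne_nil_append hw (List.cons_ne_nil Y β)) (fun v hv => ?_)
          rw [List.length_append, List.length_singleton]
          rcases List.mem_append.1 hv with h | h
          · rcases List.mem_append.1 h with h' | h'
            · have := hlen v (List.mem_append_left _ h')
              omega
            · rw [List.mem_singleton.1 h']
              have := hlen (Y :: β) (List.mem_append_right _ (List.mem_singleton.2 rfl))
              omega
          · rw [List.mem_singleton.1 h]
            have hαl : α.length ≤ 2 := Δ.rule_len Y α hr
            have := hlen (Y :: β) (List.mem_append_right _ (List.mem_singleton.2 rfl))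
            rw [List.length_append]
            simp only [List.length_cons] at this
            omega

end BPA
namespace BPA
variable {Γ : Type*} [Fintype Γ] {Δ : BPA Γ}

lemma not_mem_WBoxPos_iff (T : Set (List Γ)) (c : List Γ) :
    c ∉ Δ.WBoxPos T ↔ ∀ σ : Δ.Strat Δ.isBox, ∃ π : Δ.Strat Δ.isDiamond,
      ¬ 0 < Δ.reachP σ π T c := by
  unfold WBoxPos
  rw [Set.mem_setOf_eq]
  push_neg
  rfl

/-- Case A of the forward direction. -/
lemma caseA (ΓT : Set Γ) (X : Γ) (γ : List Γ)
    (hXε : [X] ∉ Δ.WBoxPos (topLang ΓT ∪ {([] : List Γ)} : Set (List Γ))) :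
    (X :: γ) ∉ Δ.WBoxPos (topLang ΓT) := by
  rintro ⟨σ', hσ'⟩
  have hne := (not_mem_WBoxPos_iff _ _).1 hXε
  obtain ⟨π0, hπ0⟩ := hne (σ'.induce γ)
  set π' := combStrat γ π0 (fun _ => Δ.dfltStrat Δ.isDiamond) with hπ'
  obtain ⟨n, hn⟩ := (reachP_pos_iff σ' π' _ _).1 (hσ' π')
  have hsim := simA γ ΓT σ' (σ'.induce γ) π' π0
    (fun u c hu hc α => choice_lift_comb_D γ σ' π0 _ u c α hu hc) n [] [X] (by simp)
  rw [reachP_eq_zero _ _ _ _ hπ0 n] at hsim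
  simp only [List.map_nil, List.singleton_append] at hsim
  exact absurd (lt_of_lt_of_le hn hsim) (lt_irrefl 0)

/-- Case B of the forward direction. -/
lemma caseB (ΓT : Set Γ) (X : Γ) (γ : List Γ)
    (hXT : [X] ∉ Δ.WBoxPos (topLang ΓT)) (hγ : γ ∉ Δ.WBoxPos (topLang ΓT)) :
    (X :: γ) ∉ Δ.WBoxPos (topLang ΓT) := by
  rintro ⟨σ', hσ'⟩
  have hneX := (not_mem_WBoxPos_iff _ _).1 hXT
  have hneγ := (not_mem_WBoxPos_iff _ _).1 hγ
  obtain ⟨π0, hπ0⟩ := hneX (σ'.induce γ)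
  set πs := fun h => Classical.choose (hneγ (σ'.shift h)) with hπs
  have hπsspec : ∀ h, ¬ 0 < Δ.reachP (σ'.shift h) (πs h) (topLang ΓT) γ :=
    fun h => Classical.choose_spec (hneγ (σ'.shift h))
  set π' := combStrat γ π0 πs with hπ'
  obtain ⟨n, hn⟩ := (reachP_pos_iff σ' π' _ _).1 (hσ' π')
  have hpop : ∀ u : List (List Γ), (∀ v ∈ u, v ≠ []) → ∀ m,
      Δ.reachN σ' π' (topLang ΓT) m (u.map (· ++ γ)) γ = 0 := by
    intro u hu m
    have hpiv := reachN_pivot_D γ σ' π0 πs (topLang ΓT) (u.map (· ++ γ))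
      (longer_lift hu) m [] γ (Or.inl ⟨rfl, rfl⟩)
    rw [List.append_nil] at hpiv
    rw [hpiv]
    exact reachP_eq_zero _ _ _ _ (hπsspec _) m
  have hsim := simB γ ΓT σ' (σ'.induce γ) π' π0
    (fun u c hu hc α => choice_lift_comb_D γ σ' π0 _ u c α hu hc) hpop n [] [X] (by simp)
  rw [reachP_eq_zero _ _ _ _ hπ0 n] at hsim
  simp only [List.map_nil, List.singleton_append] at hsim
  exact absurd (lt_of_lt_of_le hn hsim) (lt_irrefl 0)

/-- Case (i) of the backward direction. -/
lemma caseI (ΓT : Set Γ) (X : Γ) (γ : List Γ)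
    (hX : [X] ∈ Δ.WBoxPos (topLang ΓT)) : (X :: γ) ∈ Δ.WBoxPos (topLang ΓT) := by
  obtain ⟨σ0, hσ0⟩ := hX
  refine ⟨combStrat γ σ0 (fun _ => Δ.dfltStrat Δ.isBox), fun π' => ?_⟩
  obtain ⟨n, hn⟩ := (reachP_pos_iff σ0 (π'.induce γ) _ _).1 (hσ0 (π'.induce γ))
  have hsim := simI γ ΓT (combStrat γ σ0 (fun _ => Δ.dfltStrat Δ.isBox)) σ0 π' (π'.induce γ)
    (fun u c hu hc α => choice_lift_comb_B γ σ0 _ π' u c α hu hc) n [] [X] (by simp)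
  simp only [List.map_nil, List.singleton_append] at hsim
  exact (reachP_pos_iff _ _ _ _).2 ⟨n, lt_of_lt_of_le hn hsim⟩

/-- The finite set of possible pivot histories. -/
lemma finite_histories (N : ℕ) (M : ℕ) :
    {h : List (List Γ) | h.length ≤ N ∧ ∀ v ∈ h, v.length ≤ M}.Finite := by
  have hC : {u : List Γ | u.length ≤ M}.Finite := List.finite_length_le Γ M
  have : Finite ↥{u : List Γ | u.length ≤ M} := hC.to_subtype
  have hL : {l : List ↥{u : List Γ | u.length ≤ M} | l.length ≤ N}.Finite :=
    List.finite_length_le _ N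
  refine Set.Finite.subset (hL.image (List.map Subtype.val)) ?_
  rintro h ⟨h1, h2⟩
  refine ⟨h.attach.map (fun v => ⟨v.1, h2 v.1 v.2⟩), ?_, ?_⟩
  · rw [Set.mem_setOf_eq, List.length_map, List.length_attach]
    exact h1
  · rw [List.map_map]
    show h.attach.map (fun v => v.1) = h
    exact List.attach_map_subtype_val h

/-- Case (ii) of the backward direction. -/
lemma caseII (ΓT : Set Γ) (X : Γ) (γ : List Γ)
    (hX : [X] ∈ Δ.WBoxPos (topLang ΓT ∪ {([] : List Γ)} : Set (List Γ)))
    (hγ : γ ∈ Δ.WBoxPos (topLang ΓT)) : (X :: γ) ∈ Δ.WBoxPos (topLang ΓT) := by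
  obtain ⟨σ0, hσ0⟩ := hX
  obtain ⟨σγ, hσγ⟩ := hγ
  refine ⟨combStrat γ σ0 (fun _ => σγ), fun π' => ?_⟩
  set σ' := combStrat γ σ0 (fun _ => σγ) with hσ'def
  set π0 := π'.induce γ with hπ0def
  obtain ⟨N, hN⟩ := (reachP_pos_iff σ0 π0 _ _).1 (hσ0 π0)
  -- the finite set of pivot histories
  set H : Set (List (List Γ)) :=
    {h | h.length ≤ N + 1 ∧ ∀ v ∈ h, v.length ≤ N + 1 + γ.length} with hHdef
  have hHfin : H.Finite := finite_histories (N+1) (N+1+γ.length)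
  -- a uniform horizon n₂
  set nfun : List (List Γ) → ℕ :=
    fun h => Classical.choose ((reachP_pos_iff σγ (π'.shift h) _ _).1 (hσγ (π'.shift h)))
    with hnfun
  have hnfunspec : ∀ h, 0 < Δ.reachN σγ (π'.shift h) (topLang ΓT) (nfun h) [] γ :=
    fun h => Classical.choose_spec ((reachP_pos_iff σγ (π'.shift h) _ _).1 (hσγ (π'.shift h)))
  obtain ⟨n₂, hn₂⟩ : ∃ n₂, ∀ h ∈ H, nfun h ≤ n₂ := by
    obtain ⟨n₂, hn₂⟩ := (hHfin.image nfun).bddAbove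
    exact ⟨n₂, fun h hh => hn₂ (Set.mem_image_of_mem nfun hh)⟩
  set vfun : List (List Γ) → ℝ :=
    fun h => Δ.reachN σγ (π'.shift h) (topLang ΓT) n₂ [] γ with hvfun
  have hvpos : ∀ h ∈ H, 0 < vfun h := fun h hh =>
    lt_of_lt_of_le (hnfunspec h) (reachN_mono' σγ (π'.shift h) _ [] γ (hn₂ h hh))
  have hvle1 : ∀ h, vfun h ≤ 1 := fun h => reachN_le_one _ _ _ _ _ _
  -- the minimum δ
  obtain ⟨δ, hδmem, hδmin⟩ := Set.exists_min_image (insert (1:ℝ) (vfun '' H)) id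
    ((hHfin.image vfun).insert 1) ⟨1, Set.mem_insert 1 _⟩
  have hδ0 : 0 < δ := by
    rcases hδmem with rfl | ⟨h, hh, rfl⟩
    · norm_num
    · exact hvpos h hh
  have hδ1 : δ ≤ 1 := hδmin 1 (Set.mem_insert 1 _)
  have hδle : ∀ h ∈ H, δ ≤ vfun h := fun h hh =>
    hδmin (vfun h) (Set.mem_insert_of_mem _ (Set.mem_image_of_mem vfun hh))
  -- the pop bound
  have hpop : ∀ u : List (List Γ), (∀ v ∈ u, v ≠ []) → u.length ≤ N →
      (∀ v ∈ u, v.length ≤ N + 1) → ∀ m, n₂ ≤ m →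
      δ ≤ Δ.reachN σ' π' (topLang ΓT) m (u.map (· ++ γ)) γ := by
    intro u hu hul hulen m hm
    have hpiv := reachN_pivot_B γ σ0 (fun _ => σγ) π' (topLang ΓT) (u.map (· ++ γ))
      (longer_lift hu) m [] γ (Or.inl ⟨rfl, rfl⟩)
    rw [List.append_nil] at hpiv
    rw [hpiv]
    have hH : u.map (· ++ γ) ∈ H := by
      constructor
      · rw [List.length_map]; omega
      · intro v hv
        obtain ⟨x, hx, rfl⟩ := List.mem_map.1 hv
        rw [List.length_append]
        have := hulen x hx
        omega
    calc δ ≤ vfun (u.map (· ++ γ)) := hδle _ hH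
      _ ≤ _ := reachN_mono' σγ (π'.shift _) _ [] γ hm
  have hsim := simII γ ΓT σ' σ0 π' π0 δ n₂ N (le_of_lt hδ0) hδ1
    (fun u c hu hc α => choice_lift_comb_B γ σ0 _ π' u c α hu hc) hpop N [] [X]
    (by simp) (by simp) (by simp)
  simp only [List.map_nil, List.singleton_append] at hsim
  refine (reachP_pos_iff _ _ _ _).2 ⟨N + n₂, lt_of_lt_of_le ?_ hsim⟩
  exact mul_pos hδ0 hN

/-- The decomposition of the winning region along the top stack symbol. -/
theorem mem_WBoxPos_cons_iff (Δ : BPA Γ) (ΓT : Set Γ) (X : Γ) (γ : List Γ) :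
    (X :: γ) ∈ Δ.WBoxPos (topLang ΓT) ↔
      [X] ∈ Δ.WBoxPos (topLang ΓT) ∨
        ([X] ∈ Δ.WBoxPos (topLang ΓT ∪ {([] : List Γ)} : Set (List Γ)) ∧
          γ ∈ Δ.WBoxPos (topLang ΓT)) := by
  constructor
  · intro hmem
    by_contra hcon
    push_neg at hcon
    obtain ⟨h1, h2⟩ := hcon
    by_cases hXε : [X] ∈ Δ.WBoxPos (topLang ΓT ∪ {([] : List Γ)} : Set (List Γ))
    · exact caseB ΓT X γ h1 (h2 hXε) hmem
    · exact caseA ΓT X γ hXε hmem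
  · rintro (hX | ⟨hX, hγ⟩)
    · exact caseI ΓT X γ hX
    · exact caseII ΓT X γ hX hγ

end BPA
/-- The recursive characterization `P(ε) = ⊥`, `P(Xγ) = X ∈ A ∨ (X ∈ B ∧ P γ)`. -/
def Pz {Γ : Type*} (A B : Set Γ) : List Γ → Prop
  | [] => False
  | X :: γ => X ∈ A ∨ (X ∈ B ∧ Pz A B γ)

section PzLemmas
variable {Γ : Type*} [Fintype Γ]

lemma WBoxPos_iff_Pz (Δ : BPA Γ) (ΓT : Set Γ) (A B : Set Γ)
    (hA : A = {X | [X] ∈ Δ.WBoxPos (topLang ΓT)})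
    (hB : B = {X | [X] ∈ Δ.WBoxPos (topLang ΓT ∪ {([] : List Γ)})}) :
    ∀ c, c ∈ Δ.WBoxPos (topLang ΓT) ↔ Pz A B c := by
  intro c
  induction c with
  | nil => exact ⟨fun h => absurd h BPA.nil_not_mem_WBoxPos, False.elim⟩
  | cons X γ ih =>
    have h1 : X ∈ A ↔ [X] ∈ Δ.WBoxPos (topLang ΓT) := by rw [hA]; rfl
    have h2 : X ∈ B ↔ [X] ∈ Δ.WBoxPos (topLang ΓT ∪ {([] : List Γ)}) := by rw [hB]; rfl
    show _ ↔ (X ∈ A ∨ (X ∈ B ∧ Pz A B γ))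
    rw [BPA.mem_WBoxPos_cons_iff Δ ΓT X γ]
    exact or_congr h1.symm (and_congr h2.symm ih)

lemma mem_kstar_symLang {B : Set Γ} {u : List Γ} :
    u ∈ KStar.kstar (symLang B) ↔ ∀ x ∈ u, x ∈ B := by
  rw [Language.mem_kstar]
  constructor
  · rintro ⟨L, rfl, hL⟩ x hx
    obtain ⟨l, hl, hxl⟩ := List.mem_flatten.1 hx
    obtain ⟨y, hy, rfl⟩ := hL l hl
    rw [List.mem_singleton.1 hxl]
    exact hy
  · intro h
    induction u with
    | nil => exact ⟨[], rfl, fun y hy => absurd hy (List.not_mem_nil)⟩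
    | cons x u ih =>
      obtain ⟨L, hL, hLmem⟩ := ih (fun z hz => h z (List.mem_cons_of_mem x hz))
      refine ⟨[x] :: L, ?_, ?_⟩
      · rw [List.flatten_cons, ← hL]; rfl
      · intro y hy
        rcases List.mem_cons.1 hy with rfl | hy'
        · exact ⟨x, h x (List.mem_cons_self), rfl⟩
        · exact hLmem y hy' 

lemma Pz_of_split {A B : Set Γ} : ∀ (u : List Γ), (∀ z ∈ u, z ∈ B) → ∀ (Y : Γ), Y ∈ A →
    ∀ (b : List Γ), Pz A B (u ++ [Y] ++ b) := by
  intro u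
  induction u with
  | nil => intro _ Y hY b; exact Or.inl hY
  | cons z u ih =>
    intro hu Y hY b
    exact Or.inr ⟨hu z (List.mem_cons_self),
      ih (fun x hx => hu x (List.mem_cons_of_mem z hx)) Y hY b⟩

lemma split_of_Pz {A B : Set Γ} : ∀ (c : List Γ), Pz A B c →
    ∃ (u : List Γ) (Y : Γ) (b : List Γ), (∀ z ∈ u, z ∈ B) ∧ Y ∈ A ∧ c = u ++ [Y] ++ b := by
  intro c
  induction c with
  | nil => exact False.elim
  | cons X γ ih =>
    rintro (hX | ⟨hX, hP⟩)
    · exact ⟨[], X, γ, fun z hz => absurd hz (List.not_mem_nil), hX, rfl⟩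
    · obtain ⟨u, Y, b, hu, hY, rfl⟩ := ih hP
      refine ⟨X :: u, Y, b, ?_, hY, rfl⟩
      intro z hz
      rcases List.mem_cons.1 hz with rfl | hz'
      · exact hX
      · exact hu z hz' 

lemma lang_iff_Pz {A B : Set Γ} (c : List Γ) :
    c ∈ KStar.kstar (symLang B) * symLang A * (⊤ : Language Γ) ↔ Pz A B c := by
  constructor
  · intro h
    obtain ⟨a, ha, b, -, rfl⟩ := Language.mem_mul.1 h
    obtain ⟨u, hu, y, hy, rfl⟩ := Language.mem_mul.1 ha
    obtain ⟨Y, hY, rfl⟩ := hy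
    exact Pz_of_split u (fun z hz => mem_kstar_symLang.1 hu z hz) Y hY b
  · intro h
    obtain ⟨u, Y, b, hu, hY, rfl⟩ := split_of_Pz c h
    exact Language.mem_mul.2 ⟨u ++ [Y],
      Language.mem_mul.2 ⟨u, mem_kstar_symLang.2 hu, [Y], ⟨Y, hY, rfl⟩, rfl⟩,
      b, trivial, rfl⟩

/-- The 3-state DFA recognizing `B* A Γ*`. -/
noncomputable def PzDFA (A B : Set Γ) : DFA Γ (Fin 3) where
  step := fun s X =>
    if s = 1 then 1 else if s = 2 then 2
    else (if X ∈ A then 1 else if X ∈ B then 0 else 2)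
  start := 0
  accept := {1}

lemma PzDFA_evalFrom_one (A B : Set Γ) : ∀ w, (PzDFA A B).evalFrom 1 w = 1 := by
  intro w
  induction w with
  | nil => rfl
  | cons x w ih =>
    show (PzDFA A B).evalFrom ((PzDFA A B).step 1 x) w = 1
    rw [show (PzDFA A B).step 1 x = 1 from rfl]
    exact ih

lemma PzDFA_evalFrom_two (A B : Set Γ) : ∀ w, (PzDFA A B).evalFrom 2 w = 2 := by
  intro w
  induction w with
  | nil => rfl
  | cons x w ih =>
    show (PzDFA A B).evalFrom ((PzDFA A B).step 2 x) w = 2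
    rw [show (PzDFA A B).step 2 x = 2 from rfl]
    exact ih

lemma PzDFA_evalFrom_zero (A B : Set Γ) :
    ∀ c, (PzDFA A B).evalFrom 0 c = 1 ↔ Pz A B c := by
  intro c
  induction c with
  | nil =>
    show (0 : Fin 3) = 1 ↔ False
    simp
  | cons X γ ih =>
    show (PzDFA A B).evalFrom ((PzDFA A B).step 0 X) γ = 1 ↔ X ∈ A ∨ (X ∈ B ∧ Pz A B γ)
    have hstep : (PzDFA A B).step 0 X
        = (if X ∈ A then 1 else if X ∈ B then (0 : Fin 3) else 2) := rfl
    rw [hstep]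
    by_cases hXA : X ∈ A
    · rw [if_pos hXA, PzDFA_evalFrom_one]
      simp [hXA]
    · rw [if_neg hXA]
      by_cases hXB : X ∈ B
      · rw [if_pos hXB, ih]
        simp [hXA, hXB]
      · rw [if_neg hXB, PzDFA_evalFrom_two]
        simp [hXA, hXB]

lemma PzDFA_accepts (A B : Set Γ) :
    (PzDFA A B).accepts = {c | Pz A B c} := by
  ext c
  rw [DFA.mem_accepts]
  show (PzDFA A B).evalFrom 0 c ∈ ({1} : Set (Fin 3)) ↔ _
  rw [Set.mem_singleton_iff, PzDFA_evalFrom_zero]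
  rfl

end PzLemmas
/-- `W_Box(T,>0) = B* A Γ*` where `A = W_Box(T,>0) ∩ Γ` and
`B = W_Box(T∪{ε},>0) ∩ Γ`; in particular `W_Box(T,>0)` is regular. -/
theorem WBoxPos_eq_regular {Γ : Type*} [Fintype Γ] (Δ : BPA Γ) (ΓT : Set Γ)
    (A B : Set Γ)
    (hA : A = {X | [X] ∈ Δ.WBoxPos (topLang ΓT)})
    (hB : B = {X | [X] ∈ Δ.WBoxPos (topLang ΓT ∪ {([] : List Γ)})}) :
    (Δ.WBoxPos (topLang ΓT) : Language Γ)
        = KStar.kstar (symLang B) * symLang A * (⊤ : Language Γ) ∧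
      Language.IsRegular (Δ.WBoxPos (topLang ΓT) : Language Γ) := by
  have key := WBoxPos_iff_Pz Δ ΓT A B hA hB
  have heq : (Δ.WBoxPos (topLang ΓT) : Language Γ)
      = KStar.kstar (symLang B) * symLang A * (⊤ : Language Γ) := by
    ext c
    erw [key c, lang_iff_Pz c]
  refine ⟨heq, Fin 3, inferInstance, PzDFA A B, ?_⟩
  rw [PzDFA_accepts A B]
  ext c
  exact (key c).symm
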